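/- Scaling invariance of the wormhole equations: let χ, a, f : ℝ → ℝ be twice differentiable with a > 0 and f > 0 everywhere, satisfying the field equations (E1), (E2), (E3) and the constraint (C) with parameters (μ, ω, Λ, ℓ) at every r. Then for every B > 0 and every sign ε ∈ {+1, -1}, the functions χ̃(r) = ε·χ(√B·r), ã(r) = a(√B·r)/B and f̃(r) = f(√B·r) satisfy (E1), (E2), (E3) and (C) with parameters (μ, ω/√B, Λ, ℓ) at every r. -/

import Mathlib

open Real Filter

noncomputable section

/-- `Λ̃ = (2ℓ+1)Λ/(4π)`. -/
def lamT (Λ : ℝ) (ℓ : ℕ) : ℝ := (2 * (ℓ : ℝ) + 1) * Λ / (4 * Real.pi)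

/-- Field equation (E1):
`χ'' = -(f'/f + a'/a)·χ' + (1/a)·[μ² - ω²/a + ℓ(ℓ+1)/f - 2Λ̃χ²]·χ`. -/
def EqE1 (μ ω Λ : ℝ) (ℓ : ℕ) (χ a f : ℝ → ℝ) (r : ℝ) : Prop :=
  deriv (deriv χ) r =
    -(deriv f r / f r + deriv a r / a r) * deriv χ r +
      (1 / a r) *
        (μ ^ 2 - ω ^ 2 / a r + (ℓ : ℝ) * ((ℓ : ℝ) + 1) / f r
          - 2 * lamT Λ ℓ * χ r ^ 2) * χ r

/-- Field equation (E2):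
`a'' = -(f'/f)·a' + ((2ℓ+1)/(4π))·[μ² - 2ω²/a - Λ̃χ²]·χ²`. -/
def EqE2 (μ ω Λ : ℝ) (ℓ : ℕ) (χ a f : ℝ → ℝ) (r : ℝ) : Prop :=
  deriv (deriv a) r =
    -(deriv f r / f r) * deriv a r +
      ((2 * (ℓ : ℝ) + 1) / (4 * Real.pi)) *
        (μ ^ 2 - 2 * ω ^ 2 / a r - lamT Λ ℓ * χ r ^ 2) * χ r ^ 2

/-- Field equation (E3):
`f'' = (1/a)·(-a'·f' + 2 + ((2ℓ+1)/(4π))·[(μ² - Λ̃χ²)·f + ℓ(ℓ+1)]·χ²)`. -/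
def EqE3 (μ ω Λ : ℝ) (ℓ : ℕ) (χ a f : ℝ → ℝ) (r : ℝ) : Prop :=
  deriv (deriv f) r =
    (1 / a r) *
      (-(deriv a r) * deriv f r + 2 +
        ((2 * (ℓ : ℝ) + 1) / (4 * Real.pi)) *
          ((μ ^ 2 - lamT Λ ℓ * χ r ^ 2) * f r + (ℓ : ℝ) * ((ℓ : ℝ) + 1)) * χ r ^ 2)

/-- Constraint (C):
`(f'/(2f))·(a' + a·f'/(2f)) - 1/f
  = ((2ℓ+1)/(8π))·[-a·χ'² + (μ² - Λ̃χ² - ω²/a + ℓ(ℓ+1)/f)·χ²]`. -/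
def EqC (μ ω Λ : ℝ) (ℓ : ℕ) (χ a f : ℝ → ℝ) (r : ℝ) : Prop :=
  (deriv f r / (2 * f r)) * (deriv a r + a r * deriv f r / (2 * f r)) - 1 / f r =
    ((2 * (ℓ : ℝ) + 1) / (8 * Real.pi)) *
      (-(a r) * deriv χ r ^ 2 +
        (μ ^ 2 - lamT Λ ℓ * χ r ^ 2 - ω ^ 2 / a r
          + (ℓ : ℝ) * ((ℓ : ℝ) + 1) / f r) * χ r ^ 2)


lemma dscale (g : ℝ → ℝ) (hg : Differentiable ℝ g) (k c : ℝ) :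
    deriv (fun s => k * g (c * s)) = fun r => (k * c) * deriv g (c * r) := by
  funext r
  have h : HasDerivAt (fun s : ℝ => k * g (c * s)) (k * (deriv g (c * r) * (c * 1))) r :=
    (((hg (c * r)).hasDerivAt.comp r ((hasDerivAt_id r).const_mul c))).const_mul k
  simpa [mul_comm, mul_assoc, mul_left_comm] using h.deriv

set_option maxHeartbeats 2000000

/-- scaling invariance of the wormhole system. If `(χ, a, f)`
solves (E1)–(E3) and (C) with parameters `(μ, ω, Λ, ℓ)`, then for any `B > 0`
and sign `ε = ±1`, the rescaled functions `r ↦ ε·χ(√B·r)`, `r ↦ a(√B·r)/B`,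
`r ↦ f(√B·r)` solve the system with parameters `(μ, ω/√B, Λ, ℓ)`. -/
theorem scaling_invariance
    (μ ω Λ : ℝ) (ℓ : ℕ) (χ a f : ℝ → ℝ)
    (hχ1 : Differentiable ℝ χ) (hχ2 : Differentiable ℝ (deriv χ))
    (ha1 : Differentiable ℝ a) (ha2 : Differentiable ℝ (deriv a))
    (hf1 : Differentiable ℝ f) (hf2 : Differentiable ℝ (deriv f))
    (hapos : ∀ r : ℝ, 0 < a r) (hfpos : ∀ r : ℝ, 0 < f r)
    (hE1 : ∀ r : ℝ, EqE1 μ ω Λ ℓ χ a f r)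
    (hE2 : ∀ r : ℝ, EqE2 μ ω Λ ℓ χ a f r)
    (hE3 : ∀ r : ℝ, EqE3 μ ω Λ ℓ χ a f r)
    (hC : ∀ r : ℝ, EqC μ ω Λ ℓ χ a f r)
    (B : ℝ) (hB : 0 < B) (ε : ℝ) (hε : ε = 1 ∨ ε = -1) (r : ℝ) :
    EqE1 μ (ω / Real.sqrt B) Λ ℓ (fun s => ε * χ (Real.sqrt B * s))
        (fun s => a (Real.sqrt B * s) / B) (fun s => f (Real.sqrt B * s)) r ∧
    EqE2 μ (ω / Real.sqrt B) Λ ℓ (fun s => ε * χ (Real.sqrt B * s))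
        (fun s => a (Real.sqrt B * s) / B) (fun s => f (Real.sqrt B * s)) r ∧
    EqE3 μ (ω / Real.sqrt B) Λ ℓ (fun s => ε * χ (Real.sqrt B * s))
        (fun s => a (Real.sqrt B * s) / B) (fun s => f (Real.sqrt B * s)) r ∧
    EqC μ (ω / Real.sqrt B) Λ ℓ (fun s => ε * χ (Real.sqrt B * s))
        (fun s => a (Real.sqrt B * s) / B) (fun s => f (Real.sqrt B * s)) r := by
  set c := Real.sqrt B with hc_def
  have hc : 0 < c := Real.sqrt_pos.mpr hB
  have hcne : c ≠ 0 := ne_of_gt hc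
  have hc2 : c ^ 2 = B := Real.sq_sqrt hB.le
  have hBne : B ≠ 0 := ne_of_gt hB
  have han : a (c * r) ≠ 0 := ne_of_gt (hapos _)
  have hfn : f (c * r) ≠ 0 := ne_of_gt (hfpos _)
  have hpi : (Real.pi : ℝ) ≠ 0 := Real.pi_ne_zero
  have hχd : deriv (fun s => ε * χ (c * s)) = fun x => (ε * c) * deriv χ (c * x) :=
    dscale χ hχ1 ε c
  have hχdd : deriv (fun x => (ε * c) * deriv χ (c * x))
      = fun x => ((ε * c) * c) * deriv (deriv χ) (c * x) := dscale (deriv χ) hχ2 (ε * c) c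
  have ea : (fun s => a (c * s) / B) = fun s => (1 / B) * a (c * s) := by
    funext s; ring
  have had : deriv (fun s => a (c * s) / B) = fun x => ((1 / B) * c) * deriv a (c * x) := by
    rw [ea, dscale a ha1]
  have hadd : deriv (fun x => ((1 / B) * c) * deriv a (c * x))
      = fun x => (((1 / B) * c) * c) * deriv (deriv a) (c * x) :=
    dscale (deriv a) ha2 ((1 / B) * c) c
  have ef : (fun s => f (c * s)) = fun s => (1 : ℝ) * f (c * s) := by
    funext s; ring
  have hfd : deriv (fun s => f (c * s)) = fun x => ((1 : ℝ) * c) * deriv f (c * x) := by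
    rw [ef, dscale f hf1]
  have hfdd : deriv (fun x => ((1 : ℝ) * c) * deriv f (c * x))
      = fun x => (((1 : ℝ) * c) * c) * deriv (deriv f) (c * x) :=
    dscale (deriv f) hf2 ((1 : ℝ) * c) c
  have e1 := hE1 (c * r); have e2 := hE2 (c * r); have e3 := hE3 (c * r)
  have e4 := hC (c * r)
  unfold EqE1 at e1; unfold EqE2 at e2; unfold EqE3 at e3; unfold EqC at e4
  rcases hε with rfl | rfl <;>
  · refine ⟨?_, ?_, ?_, ?_⟩
    · unfold EqE1
      rw [hχd, hχdd, had, hfd]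
      simp only []
      rw [e1, ← hc2]
      field_simp <;> ring
    · unfold EqE2
      rw [had, hadd, hfd]
      simp only []
      rw [e2, ← hc2]
      field_simp <;> ring
    · unfold EqE3
      rw [hfd, hfdd, had]
      simp only []
      rw [e3, ← hc2]
      field_simp <;> ring
    · unfold EqC
      rw [hfd, had, hχd]
      simp only []
      rw [← hc2]
      field_simp at e4 ⊢
      linear_combination e4
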